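/- (Equation (23)) For all m, n, k ∈ ℕ with k ≤ n and k ≤ m, the fermionic p-adic q-integral of x ↦ B_{k,n}(x,q)·B_{k,m}(x,q) exists and ∫_{ℤ_p} B_{k,n}(x,q)·B_{k,m}(x,q) dμ_{−q}(x) = C(n,k)·C(m,k)·Σ_{l=0}^{n+m−2k} C(n+m−2k,l)·(−1)^l·ξ_{l+2k,q}. -/

import Mathlib

open Finset Filter

/-- `[a]_q = (1 - q^a)/(1 - q)` for `a : ℤ`. -/
noncomputable def qnum {p : ℕ} [Fact p.Prime] (q : ℚ_[p]) (a : ℤ) : ℚ_[p] :=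
  (1 - q ^ a) / (1 - q)

/-- Kim's q-Euler polynomial `ξ_{n,q}(x)` (closed form). -/
noncomputable def xi {p : ℕ} [Fact p.Prime] (q : ℚ_[p]) (n : ℕ) (x : ℤ) : ℚ_[p] :=
  ((1 + q) / (1 - q) ^ n) *
    ∑ l ∈ Finset.range (n + 1),
      (n.choose l : ℚ_[p]) * (-1) ^ l * q ^ ((l : ℤ) * x) / (1 + q ^ (l + 1))

/-- The fermionic p-adic `r`-integral statement:
`∫_{ℤ_p} g dμ_{-r} = L` means the Riemann-type sums
`(1/[p^N]_{-r}) · Σ_{x=0}^{p^N-1} g(x) (-r)^x` converge to `L`. -/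
def fermionicIntegral (p : ℕ) [Fact p.Prime] (r : ℚ_[p]) (g : ℕ → ℚ_[p]) (L : ℚ_[p]) : Prop :=
  Filter.Tendsto
    (fun N : ℕ => ((1 + r) / (1 - (-r) ^ (p ^ N))) * ∑ x ∈ Finset.range (p ^ N), g x * (-r) ^ x)
    Filter.atTop (nhds L)

/-- The q-Bernstein polynomial `B_{k,n}(x,q) = C(n,k) [x]_q^k [1-x]_{1/q}^{n-k}`. -/
noncomputable def bern {p : ℕ} [Fact p.Prime] (q : ℚ_[p]) (k n : ℕ) (x : ℤ) : ℚ_[p] :=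
  (n.choose k : ℚ_[p]) * (qnum q x) ^ k * (qnum q⁻¹ (1 - x)) ^ (n - k)

section Aux

variable {p : ℕ} [Fact p.Prime] {q : ℚ_[p]}

lemma aux_norm_two (hp : Odd p) : ‖(2 : ℚ_[p])‖ = 1 := by
  have hle : ‖((2 : ℤ) : ℚ_[p])‖ ≤ 1 := Padic.norm_int_le_one 2
  have hnd : ¬ ((p : ℤ) ∣ 2) := by
    intro h
    have h2 : p ∣ 2 := by exact_mod_cast h
    have h3 := Nat.le_of_dvd (by norm_num) h2
    have h4 := (Fact.out : p.Prime).two_le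
    interval_cases p
    exact (Nat.not_odd_iff_even.mpr even_two) hp
  have hlt := (Padic.norm_intCast_lt_one_iff (k := (2 : ℤ))).not.mpr hnd
  push_cast at hle hlt ⊢
  rcases lt_or_eq_of_le hle with h | h
  · exact absurd h hlt
  · exact h

lemma aux_norm_q (hq : ‖1 - q‖ < 1) : ‖q‖ = 1 := by
  have h : q = -(1 - q) + 1 := by ring
  rw [h, Padic.add_eq_max_of_ne]
  · simp only [norm_neg, norm_one]
    exact max_eq_right hq.le
  · simp only [norm_neg, norm_one]
    exact ne_of_lt hq

lemma aux_q_ne_zero (hq : ‖1 - q‖ < 1) : q ≠ 0 := by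
  intro h
  have h2 := aux_norm_q hq
  rw [h, norm_zero] at h2
  norm_num at h2

lemma aux_norm_pow_sub_one (hq : ‖1 - q‖ < 1) (j : ℕ) : ‖q ^ j - 1‖ < 1 := by
  have hq1 : ‖q‖ = 1 := aux_norm_q hq
  have h : q ^ j - 1 = (∑ i ∈ Finset.range j, q ^ i) * (q - 1) := (geom_sum_mul q j).symm
  rw [h, norm_mul]
  have hs : ‖∑ i ∈ Finset.range j, q ^ i‖ ≤ 1 := by
    apply IsUltrametricDist.norm_sum_le_of_forall_le_of_nonneg zero_le_one
    intro i _
    rw [norm_pow, hq1, one_pow]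
  have h2 : ‖q - 1‖ < 1 := by rwa [norm_sub_rev]
  calc ‖∑ i ∈ Finset.range j, q ^ i‖ * ‖q - 1‖ ≤ 1 * ‖q - 1‖ := by
        apply mul_le_mul_of_nonneg_right hs (norm_nonneg _)
    _ = ‖q - 1‖ := one_mul _
    _ < 1 := h2

lemma aux_norm_one_add_pow (hp : Odd p) (hq : ‖1 - q‖ < 1) (j : ℕ) : ‖1 + q ^ j‖ = 1 := by
  have h : (1 : ℚ_[p]) + q ^ j = 2 + (q ^ j - 1) := by ring
  have hne : ‖(2 : ℚ_[p])‖ ≠ ‖q ^ j - 1‖ := by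
    rw [aux_norm_two hp]
    exact (aux_norm_pow_sub_one hq j).ne'
  rw [h, Padic.add_eq_max_of_ne hne, aux_norm_two hp]
  exact max_eq_left (aux_norm_pow_sub_one hq j).le

lemma aux_one_add_pow_ne (hp : Odd p) (hq : ‖1 - q‖ < 1) (j : ℕ) : 1 + q ^ j ≠ 0 := by
  intro h
  have := aux_norm_one_add_pow hp hq j
  rw [h, norm_zero] at this
  norm_num at this

/-- key step bound -/
lemma aux_step (x : ℚ_[p]) (hx : ‖x - 1‖ ≤ 1) :
    ‖x ^ p - 1‖ ≤ ‖x - 1‖ * max (p : ℝ)⁻¹ ‖x - 1‖ := by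
  set t := x - 1 with ht
  have hx1 : x = t + 1 := by rw [ht]; ring
  have hexp : x ^ p - 1 = ∑ j ∈ Finset.Ico 1 (p + 1), t ^ j * (p.choose j : ℚ_[p]) := by
    have hins : Finset.range (p + 1) = insert 0 (Finset.Ico 1 (p + 1)) := by
      ext a; simp; omega
    rw [hx1, add_pow, hins, Finset.sum_insert (by simp)]
    simp only [one_pow, mul_one, pow_zero, Nat.choose_zero_right, Nat.cast_one, one_mul]
    ring
  rw [hexp]
  apply IsUltrametricDist.norm_sum_le_of_forall_le_of_nonneg
  · exact mul_nonneg (norm_nonneg _) (le_max_of_le_right (norm_nonneg _))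
  intro j hj
  rw [Finset.mem_Ico] at hj
  rcases eq_or_lt_of_le hj.1 with h1 | h2
  · -- j = 1
    rw [← h1, pow_one, Nat.choose_one_right, norm_mul, Padic.norm_p]
    exact mul_le_mul_of_nonneg_left (le_max_left _ _) (norm_nonneg _)
  · -- j ≥ 2
    have hcle : ‖((p.choose j : ℤ) : ℚ_[p])‖ ≤ 1 := Padic.norm_int_le_one _
    rw [norm_mul, norm_pow]
    have h2le : ‖t‖ ^ j ≤ ‖t‖ ^ 2 := pow_le_pow_of_le_one (norm_nonneg _) hx h2
    calc ‖t‖ ^ j * ‖(p.choose j : ℚ_[p])‖ ≤ ‖t‖ ^ 2 * 1 := by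
          apply mul_le_mul h2le _ (norm_nonneg _) (pow_nonneg (norm_nonneg _) 2)
          exact_mod_cast hcle
      _ = ‖t‖ * ‖t‖ := by ring
      _ ≤ ‖t‖ * max (p : ℝ)⁻¹ ‖t‖ :=
          mul_le_mul_of_nonneg_left (le_max_right _ _) (norm_nonneg _)

lemma aux_tendsto (hq : ‖1 - q‖ < 1) :
    Filter.Tendsto (fun N : ℕ => q ^ (p ^ N)) Filter.atTop (nhds 1) := by
  set ε := ‖1 - q‖ with hε
  set c := max (p : ℝ)⁻¹ ε with hc
  have hp2 : (2 : ℝ) ≤ (p : ℝ) := by exact_mod_cast (Fact.out : p.Prime).two_le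
  have hc0 : 0 ≤ c := le_max_of_le_right (norm_nonneg _)
  have hc1 : c < 1 := by
    apply max_lt _ hq
    rw [inv_lt_one_iff₀]
    right; linarith
  have hε0 : 0 ≤ ε := norm_nonneg _
  have key : ∀ N : ℕ, ‖q ^ (p ^ N) - 1‖ ≤ ε * c ^ N := by
    intro N
    induction N with
    | zero => simp only [pow_zero, pow_one, mul_one]; rw [norm_sub_rev]
    | succ N ih =>
      have hb1 : ε * c ^ N ≤ 1 :=
        mul_le_one₀ hq.le (pow_nonneg hc0 N) (pow_le_one₀ hc0 hc1.le)
      have hstep := aux_step (q ^ (p ^ N)) (ih.trans hb1)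
      have hq2 : (q ^ (p ^ N)) ^ p = q ^ (p ^ (N + 1)) := by
        rw [← pow_mul, ← pow_succ]
      rw [hq2] at hstep
      refine hstep.trans ?_
      have hmax : max (p : ℝ)⁻¹ ‖q ^ (p ^ N) - 1‖ ≤ c := by
        apply max_le (le_max_left _ _)
        refine (ih.trans ?_).trans (le_max_right (p : ℝ)⁻¹ ε)
        calc ε * c ^ N ≤ ε * 1 :=
              mul_le_mul_of_nonneg_left (pow_le_one₀ hc0 hc1.le) hε0
          _ = ε := mul_one _
      calc ‖q ^ (p ^ N) - 1‖ * max (p : ℝ)⁻¹ ‖q ^ (p ^ N) - 1‖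
          ≤ (ε * c ^ N) * c := by
            apply mul_le_mul ih hmax (le_max_of_le_left (by positivity)) _
            exact mul_nonneg hε0 (pow_nonneg hc0 N)
        _ = ε * c ^ (N + 1) := by ring
  rw [tendsto_iff_norm_sub_tendsto_zero]
  apply squeeze_zero (fun N => norm_nonneg _) key
  have := (tendsto_pow_atTop_nhds_zero_of_lt_one hc0 hc1).const_mul ε
  simpa using this

lemma aux_one_sub_pow (t : ℚ_[p]) (j : ℕ) :
    (1 - t) ^ j = ∑ i ∈ Finset.range (j + 1), (j.choose i : ℚ_[p]) * (-1) ^ i * t ^ i := by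
  rw [sub_eq_add_neg, add_comm, add_pow]
  apply Finset.sum_congr rfl
  intro i _
  rw [neg_pow]
  ring

lemma fi_congr {g g' : ℕ → ℚ_[p]} {L L' : ℚ_[p]} (h : ∀ x, g x = g' x) (hL : L = L')
    (hfi : fermionicIntegral p q g L) : fermionicIntegral p q g' L' := by
  have hg : g = g' := funext h
  rw [← hg, ← hL]
  exact hfi

lemma fi_finsum {ι : Type*} (s : Finset ι) (c : ι → ℚ_[p]) (g : ι → ℕ → ℚ_[p]) (L : ι → ℚ_[p])
    (h : ∀ i ∈ s, fermionicIntegral p q (g i) (L i)) :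
    fermionicIntegral p q (fun x => ∑ i ∈ s, c i * g i x) (∑ i ∈ s, c i * L i) := by
  unfold fermionicIntegral at *
  have ht := tendsto_finset_sum s (fun i hi => (h i hi).const_mul (c i))
  refine ht.congr fun N => ?_
  simp only [Finset.mul_sum, Finset.sum_mul]
  rw [Finset.sum_comm]
  apply Finset.sum_congr rfl
  intro i _
  apply Finset.sum_congr rfl
  intro x _
  ring

lemma fi_pow (hp : Odd p) (hq : ‖1 - q‖ < 1) (i : ℕ) :
    fermionicIntegral p q (fun x => (q ^ i) ^ x) ((1 + q) / (1 + q ^ (i + 1))) := by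
  have hne1 : (1 : ℚ_[p]) + q ^ (i + 1) ≠ 0 := aux_one_add_pow_ne hp hq (i + 1)
  have hr1 : -(q ^ (i + 1)) ≠ 1 := by
    intro h
    apply hne1
    rw [← neg_eq_iff_eq_neg.mpr h.symm]
    ring
  have hoddN : ∀ N : ℕ, Odd (p ^ N) := fun N => hp.pow
  unfold fermionicIntegral
  have heq : ∀ N : ℕ,
      ((1 + q) / (1 - (-q) ^ p ^ N)) * ∑ x ∈ Finset.range (p ^ N), (q ^ i) ^ x * (-q) ^ x
      = (1 + q) * (1 + (q ^ p ^ N) ^ (i + 1)) / ((1 + q ^ p ^ N) * (1 + q ^ (i + 1))) := by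
    intro N
    have hterm : ∀ x : ℕ, (q ^ i) ^ x * (-q) ^ x = (-(q ^ (i + 1))) ^ x := by
      intro x
      rw [← mul_pow]
      congr 1
      rw [pow_succ]
      ring
    have hsum : ∑ x ∈ Finset.range (p ^ N), (q ^ i) ^ x * (-q) ^ x
        = ((-(q ^ (i + 1))) ^ (p ^ N) - 1) / (-(q ^ (i + 1)) - 1) := by
      rw [Finset.sum_congr rfl (fun x _ => hterm x), geom_sum_eq hr1]
    have hrp : (-(q ^ (i + 1))) ^ (p ^ N) = -((q ^ p ^ N) ^ (i + 1)) := by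
      rw [(hoddN N).neg_pow, ← pow_mul, ← pow_mul, mul_comm]
    have hqp : (-q) ^ p ^ N = -(q ^ p ^ N) := (hoddN N).neg_pow q
    rw [hsum, hrp, hqp]
    rw [sub_neg_eq_add]
    rw [show (-((q ^ p ^ N) ^ (i + 1)) - 1) = -(1 + (q ^ p ^ N) ^ (i + 1)) by ring]
    rw [show (-(q ^ (i + 1)) - 1) = -(1 + q ^ (i + 1)) by ring]
    rw [neg_div_neg_eq, div_mul_div_comm]
  refine Tendsto.congr (fun N => (heq N).symm) ?_
  have hu := aux_tendsto hq
  have hnum : Filter.Tendsto (fun N : ℕ => (1 + q) * (1 + (q ^ p ^ N) ^ (i + 1)))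
      Filter.atTop (nhds ((1 + q) * (1 + (1 : ℚ_[p]) ^ (i + 1)))) :=
    tendsto_const_nhds.mul (tendsto_const_nhds.add (hu.pow (i + 1)))
  have hden : Filter.Tendsto (fun N : ℕ => (1 + q ^ p ^ N) * (1 + q ^ (i + 1)))
      Filter.atTop (nhds ((1 + (1 : ℚ_[p])) * (1 + q ^ (i + 1)))) :=
    ((tendsto_const_nhds.add hu).mul tendsto_const_nhds)
  have hdne : ((1 : ℚ_[p]) + 1) * (1 + q ^ (i + 1)) ≠ 0 := by
    apply mul_ne_zero _ hne1
    have : ((1 : ℚ_[p]) + 1) = 2 := by norm_num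
    rw [this]
    exact two_ne_zero
  have := hnum.div hden hdne
  convert this using 2
  · rfl
  rw [one_pow]
  field_simp

lemma fi_qnum (hp : Odd p) (hq : ‖1 - q‖ < 1) (hq1 : q ≠ 1) (j : ℕ) :
    fermionicIntegral p q (fun x => (qnum q (x : ℤ)) ^ j) (xi q j 0) := by
  have h1 : (1 : ℚ_[p]) - q ≠ 0 := sub_ne_zero.mpr (Ne.symm hq1)
  have hfi := fi_finsum (Finset.range (j + 1))
    (fun i => (j.choose i : ℚ_[p]) * (-1) ^ i / (1 - q) ^ j)
    (fun i x => (q ^ i) ^ x)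
    (fun i => (1 + q) / (1 + q ^ (i + 1)))
    (fun i _ => fi_pow hp hq i)
  refine fi_congr (fun x => ?_) ?_ hfi
  · -- pointwise identity
    show ∑ i ∈ Finset.range (j + 1), (j.choose i : ℚ_[p]) * (-1) ^ i / (1 - q) ^ j * (q ^ i) ^ x
        = (qnum q (x : ℤ)) ^ j
    unfold qnum
    rw [zpow_natCast, div_pow, aux_one_sub_pow (q ^ x) j, Finset.sum_div]
    apply Finset.sum_congr rfl
    intro i _
    rw [← pow_mul, ← pow_mul, mul_comm x i]
    ring
  · -- value identity
    unfold xi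
    rw [Finset.mul_sum]
    apply Finset.sum_congr rfl
    intro i _
    rw [show ((i : ℤ) * 0) = 0 by ring, zpow_zero]
    ring

lemma aux_qnum_inv (hq0 : q ≠ 0) (hq1 : q ≠ 1) (x : ℤ) :
    qnum q⁻¹ (1 - x) = 1 - qnum q x := by
  unfold qnum
  have h1 : (1 : ℚ_[p]) - q ≠ 0 := sub_ne_zero.mpr (Ne.symm hq1)
  have h2 : (1 : ℚ_[p]) - q⁻¹ ≠ 0 := by
    rw [sub_ne_zero]
    intro h
    exact hq1 (inv_eq_one.mp h.symm)
  have h3 : q⁻¹ ^ (1 - x) = q ^ x * q⁻¹ := by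
    rw [inv_zpow, ← zpow_neg, neg_sub, zpow_sub₀ hq0, zpow_one, div_eq_mul_inv]
  rw [h3]
  have hm : (-1 : ℚ_[p]) + q ≠ 0 := by
    intro h
    exact h1 (by linear_combination -h)
  have hu : (-1 + q) * (-1 + q)⁻¹ = 1 := mul_inv_cancel₀ hm
  field_simp
  ring

end Aux

theorem stmt15 (p : ℕ) [Fact p.Prime] (hp : Odd p) (q : ℚ_[p]) (hq : ‖1 - q‖ < 1) (hq1 : q ≠ 1) (m n k : ℕ) (hkn : k ≤ n) (hkm : k ≤ m) :
    fermionicIntegral p q (fun x => bern q k n x * bern q k m x)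
      ((n.choose k : ℚ_[p]) * (m.choose k : ℚ_[p]) *
        ∑ l ∈ Finset.range (n + m - 2 * k + 1),
          ((n + m - 2 * k).choose l : ℚ_[p]) * (-1) ^ l * xi q (l + 2 * k) 0) := by
  have hq0 : q ≠ 0 := aux_q_ne_zero hq
  set M := n + m - 2 * k with hM
  have hnm : (n - k) + (m - k) = M := by omega
  have key : ∀ x : ℕ, bern q k n (x : ℤ) * bern q k m (x : ℤ)
      = ∑ l ∈ Finset.range (M + 1),
          ((n.choose k : ℚ_[p]) * (m.choose k : ℚ_[p]) * (M.choose l : ℚ_[p]) * (-1) ^ l) *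
            (qnum q (x : ℤ)) ^ (l + 2 * k) := by
    intro x
    have h1 : bern q k n (x : ℤ) * bern q k m (x : ℤ)
        = (n.choose k : ℚ_[p]) * (m.choose k : ℚ_[p]) *
          ((qnum q (x : ℤ)) ^ (2 * k) * (1 - qnum q (x : ℤ)) ^ M) := by
      unfold bern
      rw [aux_qnum_inv hq0 hq1, ← hnm, pow_add, two_mul, pow_add]
      ring
    rw [h1, aux_one_sub_pow (qnum q (x : ℤ)) M, Finset.mul_sum, Finset.mul_sum]
    apply Finset.sum_congr rfl
    intro l _
    rw [pow_add]
    ring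
  have hfi := fi_finsum (Finset.range (M + 1))
    (fun l => (n.choose k : ℚ_[p]) * (m.choose k : ℚ_[p]) * (M.choose l : ℚ_[p]) * (-1) ^ l)
    (fun l x => (qnum q (x : ℤ)) ^ (l + 2 * k))
    (fun l => xi q (l + 2 * k) 0)
    (fun l _ => fi_qnum hp hq hq1 (l + 2 * k))
  refine fi_congr (fun x => (key x).symm) ?_ hfi
  rw [Finset.mul_sum]
  apply Finset.sum_congr rfl
  intro l _
  ring
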